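/- Let μ_0 ∈ P₂(X) have finite variance, and define the SVGD iterates μ_{n+1} = (I - γ P_{μ_n} ∇log(μ_n/π))_# μ_n. Assume the map z ↦ P_{μ_n} ∇log(μ_n/π)(z) is L-Lipschitz for every n (which holds under: ‖k(x,·)‖_{H₀} ≤ B, ‖∇_x k(x,·)‖_H ≤ B; ∇log π M-Lipschitz and bounded by C_V; k and ∇k D-Lipschitz; with L = C_V(D+1)+BM). Then for every T > 0 and every n ≤ T/γ: var(μ_n)^{1/2} ≤ var(μ_0)^{1/2} e^{TL}. -/

import Mathlib

open MeasureTheory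

open MeasureTheory

section Aux

lemma aux_add3 {α : Type*} [MeasurableSpace α] {ν : Measure α} {f g h : α → ℝ}
    (hf : Integrable f ν) (hg : Integrable g ν) (hh : Integrable h ν) :
    Integrable (fun x => f x + g x + h x) ν :=
  (hf.add hg).add hh

variable {d : ℕ} (ν : Measure (EuclideanSpace ℝ (Fin d))) [IsProbabilityMeasure ν]

lemma aux_int_norm (h2 : Integrable (fun x => ‖x‖ ^ 2) ν) :
    Integrable (fun x : EuclideanSpace ℝ (Fin d) => ‖x‖) ν := by
  refine Integrable.mono' (g := fun x => 1 + ‖x‖ ^ 2) ((integrable_const (1:ℝ)).add h2)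
    continuous_norm.aestronglyMeasurable ?_
  filter_upwards with x
  rw [norm_norm]
  nlinarith [sq_nonneg (‖x‖ - 1), norm_nonneg x]

lemma aux_int_id (h2 : Integrable (fun x => ‖x‖ ^ 2) ν) :
    Integrable (fun x : EuclideanSpace ℝ (Fin d) => x) ν := by
  refine Integrable.mono' (g := fun x => 1 + ‖x‖ ^ 2) ((integrable_const (1:ℝ)).add h2)
    continuous_id.aestronglyMeasurable ?_
  filter_upwards with x
  nlinarith [sq_nonneg (‖x‖ - 1), norm_nonneg x]

lemma aux_int_sub_sq (h2 : Integrable (fun x => ‖x‖ ^ 2) ν)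
    (a : EuclideanSpace ℝ (Fin d)) :
    Integrable (fun x => ‖x - a‖ ^ 2) ν := by
  refine Integrable.mono' (g := fun x => ‖x‖ ^ 2 + 2 * ‖a‖ * ‖x‖ + ‖a‖ ^ 2)
    (aux_add3 h2 ((aux_int_norm ν h2).const_mul (2 * ‖a‖)) (integrable_const _))
    (((continuous_sub_right a).norm.pow 2).aestronglyMeasurable) ?_
  filter_upwards with x
  have h := norm_sub_le x a
  have h0 := norm_nonneg (x - a)
  rw [Real.norm_eq_abs, abs_of_nonneg (by positivity)]
  nlinarith [norm_nonneg x, norm_nonneg a]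

lemma mean_min (h2 : Integrable (fun x => ‖x‖ ^ 2) ν) (c : EuclideanSpace ℝ (Fin d)) :
    ∫ x, ‖x - ∫ y, y ∂ν‖ ^ 2 ∂ν ≤ ∫ x, ‖x - c‖ ^ 2 ∂ν := by
  have hx : Integrable (fun x : EuclideanSpace ℝ (Fin d) => x) ν := aux_int_id ν h2
  set m := ∫ y, y ∂ν with hm
  have hsub : Integrable (fun x : EuclideanSpace ℝ (Fin d) => x - m) ν :=
    hx.sub (integrable_const m)
  have hinner : Integrable (fun x : EuclideanSpace ℝ (Fin d) =>
      (inner ℝ (m - c) (x - m) : ℝ)) ν :=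
    (innerSL ℝ (m - c)).integrable_comp hsub
  have hzero : ∫ x, (inner ℝ (m - c) (x - m) : ℝ) ∂ν = 0 := by
    have hc := (innerSL ℝ (m - c)).integral_comp_comm hsub
    simp only [innerSL_apply_apply] at hc
    rw [hc]
    have h0 : ∫ x, (x - m) ∂ν = 0 := by
      rw [integral_sub hx (integrable_const m), integral_const]
      simp [hm]
    rw [h0, inner_zero_right]
  have hB2 : Integrable (fun x : EuclideanSpace ℝ (Fin d) =>
      2 * (inner ℝ (m - c) (x - m) : ℝ)) ν := hinner.const_mul 2
  have key : ∫ x, ‖x - c‖ ^ 2 ∂ν = (∫ x, ‖x - m‖ ^ 2 ∂ν) + ‖m - c‖ ^ 2 := by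
    have hexp : ∀ x : EuclideanSpace ℝ (Fin d),
        ‖x - c‖ ^ 2 = ‖x - m‖ ^ 2 + 2 * (inner ℝ (m - c) (x - m) : ℝ) + ‖m - c‖ ^ 2 := by
      intro x
      have h := norm_add_sq_real (x - m) (m - c)
      rw [sub_add_sub_cancel, real_inner_comm] at h
      linarith
    have hAB : Integrable (fun x : EuclideanSpace ℝ (Fin d) =>
        ‖x - m‖ ^ 2 + 2 * (inner ℝ (m - c) (x - m) : ℝ)) ν :=
      (aux_int_sub_sq ν h2 m).add hB2
    rw [integral_congr_ae (Filter.Eventually.of_forall hexp),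
      integral_add hAB (integrable_const _),
      integral_add (aux_int_sub_sq ν h2 m) hB2,
      integral_const_mul, hzero, integral_const]
    simp
  rw [key]
  nlinarith [sq_nonneg ‖m - c‖]

end Aux


/-- **Control of the variance along the SVGD iterates.**

`μ 0 ∈ P₂(ℝ^d)` has finite variance and `μ (n+1) = (I - γ P_{μ_n} ∇log(μ_n/π))_# μ n`,
where `g n = P_{μ_n} ∇log(μ_n/π)` is the SVGD vector field at iteration `n`, assumed
`L`-Lipschitz for every `n` (which holds under the kernel bounds `‖k(x,·)‖_{H₀} ≤ B`,
`‖∇ₓk(x,·)‖_H ≤ B`, `∇log π` `M`-Lipschitz and bounded by `C_V`, `k` and `∇k`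
`D`-Lipschitz, with `L = C_V(D+1)+BM`).  Then for every `T > 0` and `n ≤ T/γ`,
`var(μ_n)^{1/2} ≤ var(μ_0)^{1/2} e^{TL}`, where
`var(μ) = E_{x∼μ} ‖x - E_{x'∼μ}[x']‖²`. -/
theorem svgd_variance_control {d : ℕ}
    (γ L : ℝ) (hγ : 0 < γ) (hL : 0 ≤ L)
    (μ : ℕ → Measure (EuclideanSpace ℝ (Fin d)))
    [∀ n, IsProbabilityMeasure (μ n)]
    -- finite variance (second moment) of μ 0
    (hvar0 : Integrable (fun x => ‖x‖ ^ 2) (μ 0))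
    -- the SVGD vector field g n = P_{μ_n} ∇log(μ_n/π)
    (g : ℕ → EuclideanSpace ℝ (Fin d) → EuclideanSpace ℝ (Fin d))
    -- SVGD update: μ_{n+1} = (I - γ g_n)_# μ_n
    (hrec : ∀ n, μ (n + 1) = Measure.map (fun x => x - γ • g n x) (μ n))
    -- z ↦ P_{μ_n} ∇log(μ_n/π)(z) is L-Lipschitz for every n
    (hLip : ∀ n x y, ‖g n x - g n y‖ ≤ L * ‖x - y‖) :
    ∀ T : ℝ, 0 < T → ∀ n : ℕ, (n : ℝ) ≤ T / γ →
      Real.sqrt (∫ x, ‖x - ∫ y, y ∂ μ n‖ ^ 2 ∂ μ n) ≤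
        Real.sqrt (∫ x, ‖x - ∫ y, y ∂ μ 0‖ ^ 2 ∂ μ 0) * Real.exp (T * L) := by
  intro T hT n hn
  set K := 1 + γ * L with hKdef
  have hK0 : 0 ≤ K := by nlinarith
  have main : ∀ n, Integrable (fun x => ‖x‖ ^ 2) (μ n) ∧
      Real.sqrt (∫ x, ‖x - ∫ y, y ∂ μ n‖ ^ 2 ∂ μ n) ≤
        K ^ n * Real.sqrt (∫ x, ‖x - ∫ y, y ∂ μ 0‖ ^ 2 ∂ μ 0) := by
    intro n
    induction n with
    | zero => exact ⟨hvar0, by simp⟩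
    | succ n ih =>
      obtain ⟨h2, hv⟩ := ih
      set Tm : EuclideanSpace ℝ (Fin d) → EuclideanSpace ℝ (Fin d) :=
        fun x => x - γ • g n x with hTm
      have hTlip : ∀ x y, ‖Tm x - Tm y‖ ≤ K * ‖x - y‖ := by
        intro x y
        have h1 : Tm x - Tm y = (x - y) - γ • (g n x - g n y) := by
          simp only [hTm, smul_sub]; abel
        rw [h1]
        calc ‖(x - y) - γ • (g n x - g n y)‖
            ≤ ‖x - y‖ + ‖γ • (g n x - g n y)‖ := norm_sub_le _ _
          _ = ‖x - y‖ + γ * ‖g n x - g n y‖ := by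
              rw [norm_smul, Real.norm_eq_abs, abs_of_pos hγ]
          _ ≤ ‖x - y‖ + γ * (L * ‖x - y‖) := by
              have := hLip n x y
              nlinarith
          _ = K * ‖x - y‖ := by ring
      have hTcont : Continuous Tm := by
        have : LipschitzWith ⟨K, hK0⟩ Tm :=
          LipschitzWith.of_dist_le_mul fun x y => by
            rw [dist_eq_norm, dist_eq_norm]; exact hTlip x y
        exact this.continuous
      have hmap : μ (n + 1) = Measure.map Tm (μ n) := hrec n
      have hTbound : ∀ x, ‖Tm x‖ ≤ ‖Tm 0‖ + K * ‖x‖ := by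
        intro x
        have h1 := hTlip x 0
        rw [sub_zero] at h1
        have h2' : ‖Tm x‖ - ‖Tm 0‖ ≤ ‖Tm x - Tm 0‖ := norm_sub_norm_le _ _
        linarith
      have h2' : Integrable (fun x => ‖Tm x‖ ^ 2) (μ n) := by
        refine Integrable.mono' (g := fun x => ‖Tm 0‖ ^ 2 + 2 * ‖Tm 0‖ * K * ‖x‖ + K ^ 2 * ‖x‖ ^ 2)
          (aux_add3 (integrable_const _) ((aux_int_norm (μ n) h2).const_mul (2 * ‖Tm 0‖ * K))
            (h2.const_mul (K ^ 2)))
          ((hTcont.norm.pow 2).aestronglyMeasurable) ?_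
        filter_upwards with x
        have hb := hTbound x
        have h0 := norm_nonneg (Tm x)
        rw [Real.norm_eq_abs, abs_of_nonneg (by positivity)]
        nlinarith [norm_nonneg x, norm_nonneg (Tm 0)]
      have h2next : Integrable (fun x => ‖x‖ ^ 2) (μ (n + 1)) := by
        rw [hmap, integrable_map_measure (g := fun x => ‖x‖ ^ 2)
          ((continuous_norm.pow 2).aestronglyMeasurable) hTcont.measurable.aemeasurable]
        exact h2'
      set m := ∫ y, y ∂ μ n with hmdef
      have hmin := mean_min (μ (n + 1)) h2next (Tm m)
      have hpush : ∫ x, ‖x - Tm m‖ ^ 2 ∂ μ (n + 1)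
          = ∫ x, ‖Tm x - Tm m‖ ^ 2 ∂ μ n := by
        rw [hmap, integral_map (f := fun x => ‖x - Tm m‖ ^ 2) hTcont.measurable.aemeasurable
          (((continuous_sub_right (Tm m)).norm.pow 2).aestronglyMeasurable)]
      have hmono : ∫ x, ‖Tm x - Tm m‖ ^ 2 ∂ μ n ≤ K ^ 2 * ∫ x, ‖x - m‖ ^ 2 ∂ μ n := by
        rw [← integral_const_mul]
        refine integral_mono_of_nonneg (Filter.Eventually.of_forall fun x => by positivity)
          ((aux_int_sub_sq (μ n) h2 m).const_mul (K ^ 2))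
          (Filter.Eventually.of_forall fun x => ?_)
        show ‖Tm x - Tm m‖ ^ 2 ≤ K ^ 2 * ‖x - m‖ ^ 2
        have h1 := hTlip x m
        have h2'' := mul_le_mul h1 h1 (norm_nonneg _) (by positivity)
        nlinarith [norm_nonneg (Tm x - Tm m), norm_nonneg (x - m)]
      refine ⟨h2next, ?_⟩
      calc Real.sqrt (∫ x, ‖x - ∫ y, y ∂ μ (n+1)‖ ^ 2 ∂ μ (n+1))
          ≤ Real.sqrt (K ^ 2 * ∫ x, ‖x - m‖ ^ 2 ∂ μ n) :=
            Real.sqrt_le_sqrt (le_trans hmin (hpush ▸ hmono))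
        _ = K * Real.sqrt (∫ x, ‖x - m‖ ^ 2 ∂ μ n) := by
            rw [Real.sqrt_mul (by positivity), Real.sqrt_sq hK0]
        _ ≤ K * (K ^ n * Real.sqrt (∫ x, ‖x - ∫ y, y ∂ μ 0‖ ^ 2 ∂ μ 0)) :=
            mul_le_mul_of_nonneg_left hv hK0
        _ = K ^ (n + 1) * Real.sqrt (∫ x, ‖x - ∫ y, y ∂ μ 0‖ ^ 2 ∂ μ 0) := by ring
  obtain ⟨_, hv⟩ := main n
  have hKexp : K ≤ Real.exp (γ * L) := by
    have := Real.add_one_le_exp (γ * L)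
    linarith
  have hKpow : K ^ n ≤ Real.exp (T * L) := by
    calc K ^ n ≤ Real.exp (γ * L) ^ n := pow_le_pow_left₀ hK0 hKexp n
      _ = Real.exp ((n : ℝ) * (γ * L)) := (Real.exp_nat_mul _ n).symm
      _ ≤ Real.exp (T * L) := by
          apply Real.exp_le_exp.mpr
          have hnγ : (n : ℝ) * γ ≤ T := (le_div_iff₀ hγ).mp hn
          nlinarith
  calc Real.sqrt (∫ x, ‖x - ∫ y, y ∂ μ n‖ ^ 2 ∂ μ n)
      ≤ K ^ n * Real.sqrt (∫ x, ‖x - ∫ y, y ∂ μ 0‖ ^ 2 ∂ μ 0) := hv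
    _ ≤ Real.exp (T * L) * Real.sqrt (∫ x, ‖x - ∫ y, y ∂ μ 0‖ ^ 2 ∂ μ 0) :=
        mul_le_mul_of_nonneg_right hKpow (Real.sqrt_nonneg _)
    _ = Real.sqrt (∫ x, ‖x - ∫ y, y ∂ μ 0‖ ^ 2 ∂ μ 0) * Real.exp (T * L) := mul_comm _ _
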